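/- Let \(\widehat{A} = \begin{pmatrix} 0 & \widehat{x}^T & \widehat{a} \\ \widehat{y} & O & 0 \\ \widehat{b} & 0 & 0 \end{pmatrix}\) be a dual complex matrix of size \(m+2\), where \(\widehat{x}, \widehat{y} \in \mathbb{DC}^m\) and \(\widehat{a}, \widehat{b}\) are dual scalars, and set \(\widehat{\theta} = \widehat{x}^T\widehat{y} + \widehat{a}\widehat{b}\). If \(\widehat{\theta}\) is a unit in the dual numbers (equivalently its standard part is nonzero), then \(\begin{pmatrix} 0 & \widehat{\theta}^{-1}\widehat{x}^T & \widehat{\theta}^{-1}\widehat{a} \\ \widehat{y}\widehat{\theta}^{-1} & O & 0 \\ \widehat{b}\widehat{\theta}^{-1} & 0 & 0 \end{pmatrix}\) is the group inverse of \(\widehat{A}\): it satisfies \(\widehat{A}\widehat{X}\widehat{A} = \widehat{A}\), \(\widehat{X}\widehat{A}\widehat{X} = \widehat{X}\), \(\widehat{A}\widehat{X} = \widehat{X}\widehat{A}\). -/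

import Mathlib

open Matrix

abbrev DC := DualNumber ℂ

set_option maxHeartbeats 1000000

theorem stmt19 {m : ℕ} (x y : Fin m → DC) (a b : DC)
    (hu : IsUnit (∑ i, x i * y i + a * b)) :
    let θ : DC := ∑ i, x i * y i + a * b
    let Brow : Matrix Unit (Fin m ⊕ Unit) DC := fun _ j => Sum.elim x (fun _ => a) j
    let Ccol : Matrix (Fin m ⊕ Unit) Unit DC := fun i _ => Sum.elim y (fun _ => b) i
    let A := Matrix.fromBlocks (0 : Matrix Unit Unit DC) Brow Ccol
      (0 : Matrix (Fin m ⊕ Unit) (Fin m ⊕ Unit) DC)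
    let X := Matrix.fromBlocks (0 : Matrix Unit Unit DC)
      ((fun _ j => Ring.inverse θ * Sum.elim x (fun _ => a) j) :
        Matrix Unit (Fin m ⊕ Unit) DC)
      ((fun i _ => Sum.elim y (fun _ => b) i * Ring.inverse θ) :
        Matrix (Fin m ⊕ Unit) Unit DC)
      (0 : Matrix (Fin m ⊕ Unit) (Fin m ⊕ Unit) DC)
    A * X * A = A ∧ X * A * X = X ∧ A * X = X * A := by
  intro θ Brow Ccol A X
  set t : DC := Ring.inverse θ with ht
  have h1 : θ * t = 1 := Ring.mul_inverse_cancel _ hu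
  have h2 : t * θ = 1 := Ring.inverse_mul_cancel _ hu
  have hB' : ((fun _ j => Ring.inverse θ * Sum.elim x (fun _ => a) j) :
      Matrix Unit (Fin m ⊕ Unit) DC) = t • Brow := by
    funext i j; rw [Matrix.smul_apply]; simp [Brow, Matrix.smul_apply, smul_eq_mul, ht]
  have hC' : ((fun i _ => Sum.elim y (fun _ => b) i * Ring.inverse θ) :
      Matrix (Fin m ⊕ Unit) Unit DC) = t • Ccol := by
    funext i j; rw [Matrix.smul_apply]; simp [Ccol, Matrix.smul_apply, smul_eq_mul, mul_comm, ht]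
  have hX : X = Matrix.fromBlocks 0 (t • Brow) (t • Ccol) 0 := by
    unfold X
    rw [hB', hC']
  have hBC : Brow * Ccol = θ • (1 : Matrix Unit Unit DC) := by
    refine Matrix.ext fun i j => ?_
    rw [Matrix.mul_apply]
    simp [Brow, Ccol, Matrix.mul_apply, Fintype.sum_sum_type, θ, Matrix.smul_apply,
      Matrix.one_apply]
  have key1 : (t • Brow) * Ccol = (1 : Matrix Unit Unit DC) := by
    rw [Matrix.smul_mul, hBC, smul_smul, h2, one_smul]
  have key1' : Brow * (t • Ccol) = (1 : Matrix Unit Unit DC) := by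
    rw [Matrix.mul_smul, hBC, smul_smul, mul_comm t θ, h1, one_smul]
  have key2 : (t • (Ccol * Brow)) * Ccol = Ccol := by
    rw [Matrix.smul_mul, Matrix.mul_assoc, hBC, Matrix.mul_smul, Matrix.mul_one,
      smul_smul, h2, one_smul]
  have key3 : Brow * (t • (Ccol * Brow)) = Brow := by
    rw [Matrix.mul_smul, ← Matrix.mul_assoc, hBC, Matrix.smul_mul, Matrix.one_mul,
      smul_smul, h2, one_smul]
  have key4 : (t • (Ccol * Brow)) * (t • Ccol) = t • Ccol := by
    rw [Matrix.mul_smul, key2]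
  have key5 : (t • Brow) * (t • (Ccol * Brow)) = t • Brow := by
    rw [Matrix.smul_mul, key3]
  have hAX : A * X = Matrix.fromBlocks 1 0 0 (t • (Ccol * Brow)) := by
    rw [hX]
    unfold A
    rw [Matrix.fromBlocks_multiply]
    rw [key1']
    congr 1 <;> simp [Matrix.mul_smul]
  have hXA : X * A = Matrix.fromBlocks 1 0 0 (t • (Ccol * Brow)) := by
    rw [hX]
    unfold A
    rw [Matrix.fromBlocks_multiply]
    rw [key1]
    congr 1 <;> simp [Matrix.smul_mul]
  refine ⟨?_, ?_, hAX.trans hXA.symm⟩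
  · rw [hAX]
    unfold A
    rw [Matrix.fromBlocks_multiply, key2]
    simp
  · rw [hXA, hX]
    rw [Matrix.fromBlocks_multiply, key4]
    simp [key5]
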